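/- Let Φ be the cumulative distribution function of the standard Gaussian measure on ℝ (mean 0, variance 1). For every α ∈ (0,1), every p ∈ (1-α, 1), and all x, y ∈ ℝ such that Φ(x) = 1 - α/2 and Φ(y) = (1 + (1-α)/p)/2, it holds that x < p · y. -/

import Mathlib

open ProbabilityTheory

/-- The cumulative distribution function of the standard Gaussian measure on ℝ. -/
noncomputable def stdGaussianCDF : ℝ → ℝ := fun x => cdf (gaussianReal 0 1) x

open MeasureTheory Set in
lemma stdGaussianCDF_eq (x : ℝ) :
    stdGaussianCDF x = ∫ t in Set.Iic x, gaussianPDFReal 0 1 t := by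
  rw [stdGaussianCDF, cdf_eq_real, measureReal_def, gaussianReal_apply_eq_integral 0 one_ne_zero,
    ENNReal.toReal_ofReal]
  exact integral_nonneg fun t => gaussianPDFReal_nonneg 0 1 t

open MeasureTheory Set in
lemma stdGaussianCDF_hasDerivAt (b : ℝ) :
    HasDerivAt stdGaussianCDF (gaussianPDFReal 0 1 b) b := by
  have hint : Integrable (gaussianPDFReal 0 1) := integrable_gaussianPDFReal 0 1
  have hcont : Continuous (gaussianPDFReal 0 1) := by
    rw [gaussianPDFReal_def]; continuity
  have heq : ∀ x : ℝ, stdGaussianCDF x =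
      (∫ t in Iic (0:ℝ), gaussianPDFReal 0 1 t) + ∫ t in (0:ℝ)..x, gaussianPDFReal 0 1 t := by
    intro x
    rw [stdGaussianCDF_eq, ← intervalIntegral.integral_Iic_sub_Iic hint.integrableOn
      hint.integrableOn]
    ring
  have hd : HasDerivAt (fun x => (∫ t in Iic (0:ℝ), gaussianPDFReal 0 1 t)
      + ∫ t in (0:ℝ)..x, gaussianPDFReal 0 1 t) (gaussianPDFReal 0 1 b) b := by
    exact (intervalIntegral.integral_hasDerivAt_right hint.intervalIntegrable
      (hcont.stronglyMeasurableAtFilter _ _) hcont.continuousAt).const_add _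
  exact hd.congr_of_eventuallyEq (Filter.Eventually.of_forall fun x => (heq x))

lemma stdGaussianCDF_strictMono : StrictMono stdGaussianCDF := by
  apply strictMono_of_deriv_pos
  intro x
  rw [(stdGaussianCDF_hasDerivAt x).deriv]
  exact gaussianPDFReal_pos 0 1 x one_ne_zero

open MeasureTheory Set in
lemma stdGaussianCDF_zero : stdGaussianCDF 0 = 1 / 2 := by
  have hint : Integrable (gaussianPDFReal 0 1) := integrable_gaussianPDFReal 0 1
  have hsymm : (∫ t in Iic (0:ℝ), gaussianPDFReal 0 1 t)
      = ∫ t in Ioi (0:ℝ), gaussianPDFReal 0 1 t := by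
    rw [show (Ioi (0:ℝ)) = Ioi (-(0:ℝ)) by norm_num, ← integral_comp_neg_Iic]
    congr 1
    ext t
    simp [gaussianPDFReal, neg_sq]
  have hsum : (∫ t in Iic (0:ℝ), gaussianPDFReal 0 1 t)
      + (∫ t in Ioi (0:ℝ), gaussianPDFReal 0 1 t) = 1 := by
    rw [intervalIntegral.integral_Iic_add_Ioi hint.integrableOn hint.integrableOn]
    exact integral_gaussianPDFReal_eq_one 0 one_ne_zero
  rw [stdGaussianCDF_eq]
  linarith [hsum, hsymm]

open Set in
lemma stdGaussianCDF_strictConcaveOn : StrictConcaveOn ℝ (Set.Ici 0) stdGaussianCDF := by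
  apply StrictAntiOn.strictConcaveOn_of_deriv (convex_Ici 0)
  · exact fun x _ => (stdGaussianCDF_hasDerivAt x).continuousAt.continuousWithinAt
  · rw [interior_Ici]
    intro a ha b hb hab
    rw [(stdGaussianCDF_hasDerivAt a).deriv, (stdGaussianCDF_hasDerivAt b).deriv]
    simp only [gaussianPDFReal_def, NNReal.coe_one, mul_one, sub_zero]
    apply mul_lt_mul_of_pos_left _ (by positivity)
    apply Real.exp_lt_exp.mpr
    have : (a:ℝ)^2 < b^2 := by nlinarith [mem_Ioi.mp ha, mem_Ioi.mp hb]
    nlinarith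

/-- Failure case of the Prejudicial Trick for Gaussian nonconformity scores (upper-tail form):
if `Φ x = 1 - α/2` and `Φ y = (1 + (1-α)/p)/2`, then `x < p·y`. -/
theorem gaussian_failure_upper (α p : ℝ) (hα : α ∈ Set.Ioo (0 : ℝ) 1)
    (hp : p ∈ Set.Ioo (1 - α) 1) (x y : ℝ)
    (hx : stdGaussianCDF x = 1 - α / 2)
    (hy : stdGaussianCDF y = (1 + (1 - α) / p) / 2) :
    x < p * y := by
  obtain ⟨hα0, hα1⟩ := hα
  obtain ⟨hp1, hp2⟩ := hp
  have hp0 : 0 < p := by linarith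
  have hy0 : 0 < y := by
    apply stdGaussianCDF_strictMono.lt_iff_lt.mp
    rw [stdGaussianCDF_zero, hy]
    have : 0 < (1 - α) / p := div_pos (by linarith) hp0
    linarith
  have hconc := stdGaussianCDF_strictConcaveOn.2 (Set.self_mem_Ici)
    (Set.mem_Ici.mpr hy0.le) hy0.ne (show (0:ℝ) < 1 - p by linarith) hp0 (by ring)
  rw [smul_zero, zero_add, smul_eq_mul, smul_eq_mul] at hconc
  apply stdGaussianCDF_strictMono.lt_iff_lt.mp
  rw [hx]
  calc 1 - α / 2 = (1 - p) * (1/2) + p * ((1 + (1 - α) / p) / 2) := by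
        field_simp; ring
    _ = (1 - p) * stdGaussianCDF 0 + p * stdGaussianCDF y := by
        rw [stdGaussianCDF_zero, hy]
    _ < stdGaussianCDF (p * y) := hconc
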